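/- Let S be a finite set, w : S → ℝ_{≥0}, X the random element with Pr(X=x) proportional to w(x), and U ⊆ S a subset with |U| ≤ |S|/C for some C > 1. If H(X) ≥ log|S| − K, then w(U)/w(S) ≤ (K + log 3)/log C, provided log C > K + log 3. -/

import Mathlib

/-- The (natural-log) Shannon entropy of the random element of `S` chosen with
probability proportional to the weight `w`. -/
noncomputable def wEntropy {α : Type*} (S : Finset α) (w : α → ℝ) : ℝ :=
  ∑ x ∈ S, -((w x / ∑ y ∈ S, w y) * Real.log (w x / ∑ y ∈ S, w y))

/-- Jensen-type bound: the contribution of a block to the entropy is at most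
`negMulLog q + q * log |T|` where `q` is the block's total mass. -/
lemma ent_block_le {α : Type*} (T : Finset α) (p : α → ℝ) (hp : ∀ x ∈ T, 0 ≤ p x) :
    ∑ x ∈ T, Real.negMulLog (p x) ≤
      Real.negMulLog (∑ x ∈ T, p x) + (∑ x ∈ T, p x) * Real.log T.card := by
  rcases T.eq_empty_or_nonempty with rfl | hT
  · simp
  set q := ∑ x ∈ T, p x with hq
  have hq0 : 0 ≤ q := Finset.sum_nonneg hp
  rcases eq_or_lt_of_le hq0 with hq0' | hq0'
  · have hz : ∀ x ∈ T, p x = 0 := by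
      intro x hx
      have := (Finset.sum_eq_zero_iff_of_nonneg hp).mp hq0'.symm
      exact this x hx
    rw [Finset.sum_congr rfl (fun x hx => by rw [hz x hx]), ← hq0']
    simp
  have hn : (0 : ℝ) < T.card := by exact_mod_cast Finset.card_pos.mpr hT
  have hjen := Real.concaveOn_negMulLog.le_map_sum (t := T) (w := fun _ => (T.card : ℝ)⁻¹)
    (p := p) (fun i _ => by positivity)
    (by rw [Finset.sum_const, nsmul_eq_mul]; exact mul_inv_cancel₀ hn.ne')
    (fun i hi => Set.mem_Ici.mpr (hp i hi))
  simp only [smul_eq_mul] at hjen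
  have hR : ∑ i ∈ T, (T.card:ℝ)⁻¹ * p i = (T.card:ℝ)⁻¹ * q := by rw [← Finset.mul_sum]
  rw [hR] at hjen
  have h2 : ∑ x ∈ T, Real.negMulLog (p x) ≤ T.card * Real.negMulLog ((T.card : ℝ)⁻¹ * q) := by
    calc ∑ x ∈ T, Real.negMulLog (p x)
        = (T.card : ℝ) * ((T.card : ℝ)⁻¹ * ∑ x ∈ T, Real.negMulLog (p x)) := by
          field_simp
      _ ≤ (T.card : ℝ) * Real.negMulLog ((T.card : ℝ)⁻¹ * q) := by
          apply mul_le_mul_of_nonneg_left _ hn.le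
          rw [Finset.mul_sum]; exact hjen
  refine h2.trans_eq ?_
  rw [Real.negMulLog, Real.negMulLog, Real.log_mul (by positivity) (ne_of_gt hq0'),
    Real.log_inv]
  field_simp
  ring

theorem entropy_le_log_card_aux {α : Type*} (S : Finset α) (w : α → ℝ)
    (hw : ∀ x ∈ S, 0 ≤ w x) (hW : 0 < ∑ y ∈ S, w y) :
    wEntropy S w ≤ Real.log S.card := by
  have h := ent_block_le S (fun x => w x / ∑ y ∈ S, w y)
    (fun x hx => div_nonneg (hw x hx) hW.le)
  have hsum : ∑ x ∈ S, w x / ∑ y ∈ S, w y = 1 := by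
    rw [← Finset.sum_div]; field_simp
  rw [hsum] at h
  simpa [wEntropy, Real.negMulLog, neg_mul] using h

/-- If `H(X) ≥ log|S| − K` for the `w`-weighted random element `X` of `S`, and
`U ⊆ S` with `|U| ≤ |S|/C`, `C > 1`, `log C > K + log 3`, then
`w(U)/w(S) ≤ (K + log 3)/log C`. -/
theorem stmt9 {α : Type*} (S : Finset α) (hS : S.Nonempty) (w : α → ℝ)
    (hw : ∀ x ∈ S, 0 ≤ w x) (hW : 0 < ∑ y ∈ S, w y)
    (U : Finset α) (hU : U ⊆ S) (C K : ℝ) (hC : 1 < C)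
    (hUcard : (U.card : ℝ) ≤ (S.card : ℝ) / C)
    (hH : Real.log (S.card : ℝ) - K ≤ wEntropy S w)
    (hCK : K + Real.log 3 < Real.log C) :
    (∑ x ∈ U, w x) / (∑ y ∈ S, w y) ≤ (K + Real.log 3) / Real.log C := by
  classical
  have hlogC : 0 < Real.log C := Real.log_pos hC
  -- K ≥ 0
  have hK0 : 0 ≤ K := by
    have := (entropy_le_log_card_aux S w hw hW)
    linarith [hH]
  have hKlog3 : 0 < K + Real.log 3 := by
    have : (0:ℝ) < Real.log 3 := Real.log_pos (by norm_num)
    linarith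
  set W := ∑ y ∈ S, w y with hWdef
  set p : α → ℝ := fun x => w x / W with hp
  have hp0 : ∀ x ∈ S, 0 ≤ p x := fun x hx => div_nonneg (hw x hx) hW.le
  set q := ∑ x ∈ U, p x with hqdef
  have hq_eq : q = (∑ x ∈ U, w x) / W := by rw [hqdef, hp, ← Finset.sum_div]
  have hpsum : ∑ x ∈ S, p x = 1 := by
    rw [hp, ← Finset.sum_div]; field_simp; exact hWdef.symm
  have hsplit : (S \ U) ∪ U = S := Finset.sdiff_union_of_subset hU
  have hdisj : Disjoint (S \ U) U := Finset.sdiff_disjoint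
  have hq0 : 0 ≤ q := Finset.sum_nonneg (fun x hx => hp0 x (hU hx))
  have hq1 : q + ∑ x ∈ S \ U, p x = 1 := by
    have h := Finset.sum_union (f := p) hdisj
    rw [hsplit, hpsum] at h
    linarith
  have hq1' : ∑ x ∈ S \ U, p x = 1 - q := by linarith
  have hq_le1 : q ≤ 1 := by
    have : 0 ≤ ∑ x ∈ S \ U, p x :=
      Finset.sum_nonneg (fun x hx => hp0 x (Finset.mem_sdiff.mp hx).1)
    linarith
  -- entropy split
  have hEnt : wEntropy S w = ∑ x ∈ U, Real.negMulLog (p x)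
      + ∑ x ∈ S \ U, Real.negMulLog (p x) := by
    have h := Finset.sum_union (f := fun x => Real.negMulLog (p x)) hdisj
    rw [hsplit] at h
    have hE : wEntropy S w = ∑ x ∈ S, Real.negMulLog (p x) := by
      unfold wEntropy
      refine Finset.sum_congr rfl (fun x hx => ?_)
      simp [Real.negMulLog, hp, hWdef, neg_mul]
    rw [hE, h]; ring
  have hU_bound := ent_block_le U p (fun x hx => hp0 x (hU hx))
  have hV_bound := ent_block_le (S \ U) p (fun x hx => hp0 x (Finset.mem_sdiff.mp hx).1)
  rw [← hqdef] at hU_bound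
  rw [hq1'] at hV_bound
  -- binary entropy ≤ log 2 ≤ log 3
  have hbin : Real.negMulLog q + Real.negMulLog (1 - q) ≤ Real.log 3 := by
    have h2 := ent_block_le ({0, 1} : Finset ℕ) (fun i => if i = 0 then q else 1 - q)
      (by intro x hx; fin_cases hx <;> simp [hq0, hq_le1])
    simp at h2
    have h23 : Real.log 2 ≤ Real.log 3 := Real.log_le_log (by norm_num) (by norm_num)
    calc Real.negMulLog q + Real.negMulLog (1 - q) ≤ Real.log 2 := by
          simpa using h2
      _ ≤ Real.log 3 := h23
  -- card bounds
  have hScard : (1:ℝ) ≤ S.card := by exact_mod_cast Finset.card_pos.mpr hS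
  have hcardlt : U.card < S.card := by
    have h1 : (U.card : ℝ) < S.card :=
      lt_of_le_of_lt hUcard (div_lt_self (by linarith) hC)
    exact_mod_cast h1
  have hSU_card : (1:ℝ) ≤ (S \ U).card := by
    have : (S \ U).Nonempty := by
      rw [Finset.sdiff_nonempty]
      intro h
      have := Finset.card_le_card h
      omega
    exact_mod_cast Finset.card_pos.mpr this
  have hlogSU : Real.log (S \ U).card ≤ Real.log S.card := by
    apply Real.log_le_log (by linarith)
    exact_mod_cast Nat.cast_le.mpr (Finset.card_le_card (Finset.sdiff_subset))
  -- q * log |U| ≤ q * (log |S| - log C)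
  have hqlogU : q * Real.log U.card ≤ q * (Real.log S.card - Real.log C) := by
    rcases Finset.eq_empty_or_nonempty U with rfl | hUne
    · have : q = 0 := by simp [hqdef]
      simp [this]
    · apply mul_le_mul_of_nonneg_left _ hq0
      have hU1 : (1:ℝ) ≤ U.card := by exact_mod_cast Finset.card_pos.mpr hUne
      calc Real.log U.card ≤ Real.log ((S.card : ℝ) / C) :=
            Real.log_le_log (by linarith) hUcard
        _ = Real.log S.card - Real.log C :=
            Real.log_div (by linarith) (by linarith)
  have hchain : Real.log (S.card : ℝ) - K ≤
      Real.log 3 + q * (Real.log S.card - Real.log C) + (1 - q) * Real.log S.card := by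
    calc Real.log (S.card : ℝ) - K ≤ wEntropy S w := hH
      _ = ∑ x ∈ U, Real.negMulLog (p x) + ∑ x ∈ S \ U, Real.negMulLog (p x) := hEnt
      _ ≤ (Real.negMulLog q + q * Real.log U.card)
          + (Real.negMulLog (1 - q) + (1 - q) * Real.log (S \ U).card) := by
            exact add_le_add hU_bound hV_bound
      _ ≤ Real.log 3 + q * Real.log U.card + (1 - q) * Real.log (S \ U).card := by
            linarith
      _ ≤ Real.log 3 + q * (Real.log S.card - Real.log C) + (1 - q) * Real.log S.card := by
            have : (1 - q) * Real.log (S \ U).card ≤ (1 - q) * Real.log S.card :=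
              mul_le_mul_of_nonneg_left hlogSU (by linarith)
            linarith
  have hfinal : q * Real.log C ≤ K + Real.log 3 := by nlinarith
  rw [← hq_eq, le_div_iff₀ hlogC]
  exact hfinal
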